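/- Let γ(s) = (x₀ + r sinh s, y₀ + r cosh s) parametrize a hyperbolic circle with center p₀ = (x₀,y₀) ≠ (0,0), contained in 𝒞⁻. If the stationarity identity (1-α)⟨γ(s),γ(s)⟩ + α⟨γ(s),p₀⟩ = 0 holds for all s ∈ ℝ, then α = 2 and x₀² - y₀² = -r². -/
import Mathlib


/-- If a hyperbolic circle centered at p₀ ≠ 0 contained in 𝒞⁻ satisfies the
stationarity identity (1-α)⟨γ,γ⟩ + α⟨γ,p₀⟩ = 0, then α = 2 and ⟨p₀,p₀⟩ = -r². -/
theorem stmt_16 (L : ℝ × ℝ → ℝ × ℝ → ℝ)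
    (hL : ∀ p q : ℝ × ℝ, L p q = p.1 * q.1 - p.2 * q.2)
    (α r x₀ y₀ : ℝ) (hr : 0 < r) (hp₀ : (x₀, y₀) ≠ ((0 : ℝ), (0 : ℝ)))
    (γ : ℝ → ℝ × ℝ) (hγ : ∀ s : ℝ, γ s = (x₀ + r * Real.sinh s, y₀ + r * Real.cosh s))
    (hneg : ∀ s : ℝ, L (γ s) (γ s) < 0)
    (hstat : ∀ s : ℝ, (1 - α) * L (γ s) (γ s) + α * L (γ s) (x₀, y₀) = 0) :
    α = 2 ∧ x₀ ^ 2 - y₀ ^ 2 = -r ^ 2 := by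
  have hc : Real.cosh 1 ^ 2 - Real.sinh 1 ^ 2 = 1 := Real.cosh_sq_sub_sinh_sq 1
  have hc1 : 1 < Real.cosh 1 := Real.one_lt_cosh.mpr one_ne_zero
  have hs1 : 0 < Real.sinh 1 := by positivity
  have e0 := hstat 0
  have e1 := hstat 1
  have e2 := hstat (-1)
  simp only [hL, hγ, Real.sinh_zero, Real.cosh_zero, Real.sinh_neg, Real.cosh_neg] at e0 e1 e2
  -- e_i : C + D sinh - E cosh = 0 with
  -- C = x₀²-y₀²-(1-α)r², D = r(2-α)x₀, E = r(2-α)y₀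
  have hE : r * (2 - α) * y₀ * (Real.cosh 1 - 1) = 0 := by
    linear_combination e0 - (1/2) * e1 - (1/2) * e2 - (1 - α) * r ^ 2 * hc
  have hE0 : r * (2 - α) * y₀ = 0 := by
    rcases mul_eq_zero.mp hE with h | h
    · exact h
    · linarith
  have hC : x₀ ^ 2 - y₀ ^ 2 - (1 - α) * r ^ 2 = 0 := by
    linear_combination e0 + hE0
  have hD : r * (2 - α) * x₀ * Real.sinh 1 = 0 := by
    linear_combination e1 - e0 + (1 - α) * r ^ 2 * hc + (Real.cosh 1 - 1) * hE0
  have hD0 : r * (2 - α) * x₀ = 0 := by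
    rcases mul_eq_zero.mp hD with h | h
    · exact h
    · linarith
  have hα : α = 2 := by
    by_contra hne
    have h2 : (2 : ℝ) - α ≠ 0 := fun h => hne (by linarith)
    have hx : x₀ = 0 := by
      have := mul_eq_zero.mp hD0
      rcases this with h | h
      · rcases mul_eq_zero.mp h with h' | h'
        · exact absurd h' (ne_of_gt hr)
        · exact absurd h' h2
      · exact h
    have hy : y₀ = 0 := by
      rcases mul_eq_zero.mp hE0 with h | h
      · rcases mul_eq_zero.mp h with h' | h'
        · exact absurd h' (ne_of_gt hr)
        · exact absurd h' h2
      · exact h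
    exact hp₀ (by rw [hx, hy])
  refine ⟨hα, ?_⟩
  rw [hα] at hC
  linarith
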